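/- Consider g : ℝ^d → ℝ continuously differentiable, a nonempty set S̃ ⊆ ℝ^d, a nonnegative function P(·; S̃), and constants c₁ > 0, c₂ ≥ 0 such that ⟨∇g(x), x − proj_{S̃}(x)⟩ ≥ c₁ P(x; S̃) − c₂ for all x ∈ ℝ^d. Let x⁺ = x − γ ∇g(x), where γ = min{γ̃, γ_b} with γ_b > 0 and γ̃ satisfying 0 < γ_⋆ ≤ γ̃ ≤ (2−α)(⟨∇g(x), x − x_p⟩ + c₂ + β)/‖∇g(x)‖² for some 0 < α < 2, β > 0, x_p := proj_{S̃}(x). Then ‖x⁺ − proj_{S̃}(x⁺)‖² ≤ ‖x − x_p‖² − α γ c₁ P(x; S̃) + (2−α) γ β + 2 γ c₂, and moreover ‖x⁺ − proj_{S̃}(x⁺)‖² ≤ ‖x − x_p‖² − α γ_min c₁ P(x; S̃) + (2−α) γ_b β + 2 γ_b c₂ with γ_min := min{γ_⋆, γ_b}. (This is the single-step, pathwise descent inequality of the stochastic theorem, with g = f_ξ for the realized sample ξ.) -/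
import Mathlib
set_option maxHeartbeats 1000000


open scoped RealInnerProductSpace

/-- The single-step, pathwise descent inequality underlying the stochastic theorem
(Theorem 2), stated for a realized sample `g = f_ξ`. -/
theorem single_step_descent_inequality
    {d : ℕ} (g : EuclideanSpace ℝ (Fin d) → ℝ)
    (hg : ContDiff ℝ 1 g)
    (St : Set (EuclideanSpace ℝ (Fin d))) (hStne : St.Nonempty)
    (proj : EuclideanSpace ℝ (Fin d) → EuclideanSpace ℝ (Fin d))
    (hproj : ∀ y, proj y ∈ St ∧ ∀ z ∈ St, ‖y - proj y‖ ≤ ‖y - z‖)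
    (P : EuclideanSpace ℝ (Fin d) → ℝ) (hP : ∀ y, 0 ≤ P y)
    (c₁ c₂ : ℝ) (hc₁ : 0 < c₁) (hc₂ : 0 ≤ c₂)
    (hass : ∀ y, c₁ * P y - c₂ ≤ ⟪gradient g y, y - proj y⟫)
    (x xplus : EuclideanSpace ℝ (Fin d))
    (α β γ γt γb γstar : ℝ)
    (hα₁ : 0 < α) (hα₂ : α < 2) (hβ : 0 < β)
    (hγb : 0 < γb) (hγstar : 0 < γstar)
    (hγt₁ : γstar ≤ γt)
    (hγt₂ : γt ≤ (2 - α) * (⟪gradient g x, x - proj x⟫ + c₂ + β) / ‖gradient g x‖ ^ 2)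
    (hγ : γ = min γt γb)
    (hxplus : xplus = x - γ • gradient g x) :
    ‖xplus - proj xplus‖ ^ 2 ≤
        ‖x - proj x‖ ^ 2 - α * γ * c₁ * P x + (2 - α) * γ * β + 2 * γ * c₂
    ∧ ‖xplus - proj xplus‖ ^ 2 ≤
        ‖x - proj x‖ ^ 2 - α * min γstar γb * c₁ * P x + (2 - α) * γb * β + 2 * γb * c₂ := by
  set v := gradient g x with hv
  set p := proj x with hp
  set D := ⟪v, x - p⟫ with hD
  have hγtpos : 0 < γt := lt_of_lt_of_le hγstar hγt₁
  have hγpos : 0 < γ := hγ ▸ lt_min hγtpos hγb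
  have hγγt : γ ≤ γt := hγ ▸ min_le_left _ _
  have hγγb : γ ≤ γb := hγ ▸ min_le_right _ _
  -- ‖v‖ ≠ 0
  have hvne : ‖v‖ ^ 2 ≠ 0 := by
    intro h
    rw [h, div_zero] at hγt₂
    linarith
  have hvpos : 0 < ‖v‖ ^ 2 := lt_of_le_of_ne (by positivity) (Ne.symm hvne)
  have hkey : γt * ‖v‖ ^ 2 ≤ (2 - α) * (D + c₂ + β) := by
    rw [← le_div_iff₀ hvpos]; exact hγt₂
  -- distance bound
  have h1 : ‖xplus - proj xplus‖ ≤ ‖xplus - p‖ := (hproj xplus).2 p (hproj x).1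
  have h1' : ‖xplus - proj xplus‖ ^ 2 ≤ ‖xplus - p‖ ^ 2 := by
    have := norm_nonneg (xplus - proj xplus)
    nlinarith
  have hexp : ‖xplus - p‖ ^ 2 = ‖x - p‖ ^ 2 - 2 * γ * D + γ ^ 2 * ‖v‖ ^ 2 := by
    have : xplus - p = (x - p) - γ • v := by rw [hxplus]; abel
    rw [this, norm_sub_sq_real, real_inner_smul_right, norm_smul]
    have : ⟪x - p, v⟫ = D := real_inner_comm _ _
    rw [this]
    simp [Real.norm_eq_abs]
    ring_nf
    rw [sq_abs]
  have hDb : c₁ * P x - c₂ ≤ D := hass x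
  have hfirst : ‖xplus - proj xplus‖ ^ 2 ≤
      ‖x - p‖ ^ 2 - α * γ * c₁ * P x + (2 - α) * γ * β + 2 * γ * c₂ := by
    have hsq : γ ^ 2 * ‖v‖ ^ 2 ≤ γ * ((2 - α) * (D + c₂ + β)) := by
      calc γ ^ 2 * ‖v‖ ^ 2 = γ * (γ * ‖v‖ ^ 2) := by ring
        _ ≤ γ * (γt * ‖v‖ ^ 2) := by
            apply mul_le_mul_of_nonneg_left _ hγpos.le
            exact mul_le_mul_of_nonneg_right hγγt hvpos.le
        _ ≤ γ * ((2 - α) * (D + c₂ + β)) := mul_le_mul_of_nonneg_left hkey hγpos.le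
    nlinarith [mul_le_mul_of_nonneg_left hDb (mul_pos hα₁ hγpos).le]
  refine ⟨hfirst, ?_⟩
  have hmin : min γstar γb ≤ γ := by
    rw [hγ]; exact min_le_min hγt₁ le_rfl
  have hminpos : 0 < min γstar γb := lt_min hγstar hγb
  have hA : α * min γstar γb * c₁ * P x ≤ α * γ * c₁ * P x := by
    have := mul_le_mul_of_nonneg_left hmin (mul_nonneg (mul_nonneg hα₁.le hc₁.le) (hP x))
    nlinarith
  have hB : (2 - α) * γ * β ≤ (2 - α) * γb * β := by
    have h := mul_le_mul_of_nonneg_left (mul_le_mul_of_nonneg_right hγγb hβ.le)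
      (by linarith : (0:ℝ) ≤ 2 - α)
    nlinarith
  have hC : 2 * γ * c₂ ≤ 2 * γb * c₂ := by nlinarith [mul_le_mul_of_nonneg_right hγγb hc₂]
  linarith
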